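/- Let q, q_d ∈ ℝ³ be unit vectors, Ψ_q := 1 − q_dᵀq, e_q := q_d × q, and let ϱ ∈ (0,1) satisfy Ψ_q < ϱ². Then (1/2)‖e_q‖² ≤ Ψ_q < ‖e_q‖²/(2 − ϱ²). -/

import Mathlib

open scoped RealInnerProductSpace

/-- Cross product on `ℝ³` viewed as a Euclidean space. -/
def cross3 (a b : EuclideanSpace ℝ (Fin 3)) : EuclideanSpace ℝ (Fin 3) :=
  WithLp.toLp 2 (crossProduct a b)

lemma cross3_norm_sq (a b : EuclideanSpace ℝ (Fin 3)) :
    ‖cross3 a b‖ ^ 2 = ‖a‖ ^ 2 * ‖b‖ ^ 2 - ⟪a, b⟫ ^ 2 := by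
  have h1 : ‖cross3 a b‖ ^ 2 = ⟪cross3 a b, cross3 a b⟫ := (real_inner_self_eq_norm_sq _).symm
  have h2 : ‖a‖ ^ 2 = ⟪a, a⟫ := (real_inner_self_eq_norm_sq _).symm
  have h3 : ‖b‖ ^ 2 = ⟪b, b⟫ := (real_inner_self_eq_norm_sq _).symm
  rw [h1, h2, h3]
  simp only [cross3, EuclideanSpace.inner_eq_star_dotProduct, crossProduct]
  simp [dotProduct, Fin.sum_univ_three]
  ring

/-- For unit vectors `q, q_d` with `Ψ_q = 1 - ⟪q_d, q⟫` satisfying `0 < Ψ_q < ϱ²`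
for some `ϱ ∈ (0,1)`, the direction error `e_q = q_d × q` satisfies
`(1/2)‖e_q‖² ≤ Ψ_q < ‖e_q‖²/(2 - ϱ²)`. -/
theorem direction_error_bounds (q qd : EuclideanSpace ℝ (Fin 3)) (ϱ : ℝ)
    (hq : ‖q‖ = 1) (hqd : ‖qd‖ = 1) (hϱ0 : 0 < ϱ) (hϱ1 : ϱ < 1)
    (hΨpos : 0 < 1 - ⟪qd, q⟫) (hΨ : 1 - ⟪qd, q⟫ < ϱ ^ 2) :
    (1 / 2) * ‖cross3 qd q‖ ^ 2 ≤ 1 - ⟪qd, q⟫ ∧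
      1 - ⟪qd, q⟫ < ‖cross3 qd q‖ ^ 2 / (2 - ϱ ^ 2) := by
  have hc : ‖cross3 qd q‖ ^ 2 = 1 - ⟪qd, q⟫ ^ 2 := by
    rw [cross3_norm_sq, hq, hqd]; ring
  set c := ⟪qd, q⟫ with hcdef
  have hden : 0 < 2 - ϱ ^ 2 := by nlinarith
  constructor
  · rw [hc]; nlinarith
  · rw [hc, lt_div_iff₀ hden]; nlinarith
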